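/- Let 0 < ε < 1/2 and 0 < r ≤ 1. Then for all y ∈ [0, 1/2] with y − ε > 0, M_B(y + ε − rε, y + ε) ≥ M_B(y − ε + rε, y − ε). -/

import Mathlib

noncomputable def MB (z θ : ℝ) : ℝ :=
  z * Real.log (θ / z) + (1 - z) * Real.log ((1 - θ) / (1 - z))

/-- For `0 < ε < 1/2`, `0 < r ≤ 1`, and `y ∈ [0, 1/2]` with `y − ε > 0`:
`M_B(y + ε − rε, y + ε) ≥ M_B(y − ε + rε, y − ε)`. -/
theorem mb_upper_ge_lower (ε r y : ℝ) (hε0 : 0 < ε) (hε : ε < 1 / 2)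
    (hr0 : 0 < r) (hr1 : r ≤ 1) (hy0 : 0 ≤ y) (hy : y ≤ 1 / 2)
    (hyε : 0 < y - ε) :
    MB (y + ε - r * ε) (y + ε) ≥ MB (y - ε + r * ε) (y - ε) := by
  have hεy : ε < y := by linarith
  have ha2 : (0:ℝ) < y + ε := by linarith
  have hb2 : (0:ℝ) < 1 - (y + ε) := by linarith
  have hc2 : (0:ℝ) < y - ε := hyε
  have hd2 : (0:ℝ) < 1 - (y - ε) := by linarith
  set g : ℝ → ℝ := fun s =>
    ((y + ε - s) * Real.log (y + ε) - (y + ε - s) * Real.log (y + ε - s)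
      + (1 - (y + ε - s)) * Real.log (1 - (y + ε))
      - (1 - (y + ε - s)) * Real.log (1 - (y + ε - s)))
    - ((y - ε + s) * Real.log (y - ε) - (y - ε + s) * Real.log (y - ε + s)
      + (1 - (y - ε + s)) * Real.log (1 - (y - ε))
      - (1 - (y - ε + s)) * Real.log (1 - (y - ε + s))) with hgdef
  have key : ∀ s ∈ Set.Icc (0:ℝ) ε,
      HasDerivAt g
        (Real.log (y + ε - s) - Real.log (y + ε)
          + Real.log (1 - (y + ε)) - Real.log (1 - (y + ε - s))
          + Real.log (y - ε + s) - Real.log (y - ε)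
          + Real.log (1 - (y - ε)) - Real.log (1 - (y - ε + s))) s := by
    intro s hs
    obtain ⟨hs0, hs1⟩ := hs
    have ha1 : (0:ℝ) < y + ε - s := by linarith
    have hb1 : (0:ℝ) < 1 - (y + ε - s) := by linarith
    have hc1 : (0:ℝ) < y - ε + s := by linarith
    have hd1 : (0:ℝ) < 1 - (y - ε + s) := by linarith
    have hA : HasDerivAt (fun s : ℝ => y + ε - s) (0 - 1) s :=
      (hasDerivAt_const s (y + ε)).sub (hasDerivAt_id s)
    have hC : HasDerivAt (fun s : ℝ => y - ε + s) (0 + 1) s :=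
      (hasDerivAt_const s (y - ε)).add (hasDerivAt_id s)
    have hB : HasDerivAt (fun s : ℝ => 1 - (y + ε - s)) (0 - (0 - 1)) s :=
      (hasDerivAt_const s 1).sub hA
    have hD : HasDerivAt (fun s : ℝ => 1 - (y - ε + s)) (0 - (0 + 1)) s :=
      (hasDerivAt_const s 1).sub hC
    have t1 : HasDerivAt (fun s : ℝ => (y + ε - s) * Real.log (y + ε - s))
        ((Real.log (y + ε - s) + 1) * (0 - 1)) s :=
      (Real.hasDerivAt_mul_log ha1.ne').comp s hA
    have t2 : HasDerivAt (fun s : ℝ => (1 - (y + ε - s)) * Real.log (1 - (y + ε - s)))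
        ((Real.log (1 - (y + ε - s)) + 1) * (0 - (0 - 1))) s :=
      by have := (Real.hasDerivAt_mul_log hb1.ne').comp s hB; exact this
    have t3 : HasDerivAt (fun s : ℝ => (y - ε + s) * Real.log (y - ε + s))
        ((Real.log (y - ε + s) + 1) * (0 + 1)) s :=
      (Real.hasDerivAt_mul_log hc1.ne').comp s hC
    have t4 : HasDerivAt (fun s : ℝ => (1 - (y - ε + s)) * Real.log (1 - (y - ε + s)))
        ((Real.log (1 - (y - ε + s)) + 1) * (0 - (0 + 1))) s :=
      by have := (Real.hasDerivAt_mul_log hd1.ne').comp s hD; exact this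
    have u1 : HasDerivAt (fun s : ℝ => (y + ε - s) * Real.log (y + ε))
        ((0 - 1) * Real.log (y + ε)) s := hA.mul_const _
    have u2 : HasDerivAt (fun s : ℝ => (1 - (y + ε - s)) * Real.log (1 - (y + ε)))
        ((0 - (0 - 1)) * Real.log (1 - (y + ε))) s := hB.mul_const _
    have u3 : HasDerivAt (fun s : ℝ => (y - ε + s) * Real.log (y - ε))
        ((0 + 1) * Real.log (y - ε)) s := hC.mul_const _
    have u4 : HasDerivAt (fun s : ℝ => (1 - (y - ε + s)) * Real.log (1 - (y - ε)))
        ((0 - (0 + 1)) * Real.log (1 - (y - ε))) s := hD.mul_const _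
    have := ((((u1.sub t1).add u2).sub t2).sub (((u3.sub t3).add u4).sub t4))
    rw [hgdef]
    exact this.congr_deriv (by ring)
  have hrε0 : (0:ℝ) ≤ r * ε := le_of_lt (mul_pos hr0 hε0)
  have hrεε : r * ε ≤ ε := by nlinarith
  have hmem0 : (0:ℝ) ∈ Set.Icc (0:ℝ) ε := ⟨le_refl 0, hε0.le⟩
  have hmemr : r * ε ∈ Set.Icc (0:ℝ) ε := ⟨hrε0, hrεε⟩
  have hmono : MonotoneOn g (Set.Icc (0:ℝ) ε) := by
    apply monotoneOn_of_deriv_nonneg (convex_Icc 0 ε)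
    · exact fun x hx => (key x hx).continuousAt.continuousWithinAt
    · intro x hx
      rw [interior_Icc] at hx
      exact (key x (Set.Ioo_subset_Icc_self hx)).differentiableAt.differentiableWithinAt
    · intro x hx
      rw [interior_Icc] at hx
      rw [(key x (Set.Ioo_subset_Icc_self hx)).deriv]
      obtain ⟨hx0, hx1⟩ := hx
      have ha1 : (0:ℝ) < y + ε - x := by linarith
      have hb1 : (0:ℝ) < 1 - (y + ε - x) := by linarith
      have hc1 : (0:ℝ) < y - ε + x := by linarith
      have hd1 : (0:ℝ) < 1 - (y - ε + x) := by linarith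
      have hprod : (y + ε) * (y - ε) * ((1 - (y + ε - x)) * (1 - (y - ε + x)))
          ≤ (y + ε - x) * (y - ε + x) * ((1 - (y + ε)) * (1 - (y - ε))) := by
        nlinarith [mul_nonneg (mul_nonneg hx0.le (by linarith : (0:ℝ) ≤ 2 * ε - x))
          (by linarith : (0:ℝ) ≤ 1 - 2 * y)]
      have hlog := Real.log_le_log (by positivity) hprod
      rw [Real.log_mul (mul_pos ha2 hc2).ne' (mul_pos hb1 hd1).ne',
          Real.log_mul ha2.ne' hc2.ne', Real.log_mul hb1.ne' hd1.ne',
          Real.log_mul (mul_pos ha1 hc1).ne' (mul_pos hb2 hd2).ne',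
          Real.log_mul ha1.ne' hc1.ne', Real.log_mul hb2.ne' hd2.ne'] at hlog
      linarith
  have h0 : g 0 = 0 := by
    rw [hgdef]
    simp only [sub_zero, add_zero]
    ring
  have hle : g 0 ≤ g (r * ε) := hmono hmem0 hmemr hrε0
  have ha1 : (0:ℝ) < y + ε - r * ε := by linarith
  have hb1 : (0:ℝ) < 1 - (y + ε - r * ε) := by linarith
  have hc1 : (0:ℝ) < y - ε + r * ε := by linarith
  have hd1 : (0:ℝ) < 1 - (y - ε + r * ε) := by linarith
  have hgr : g (r * ε) = MB (y + ε - r * ε) (y + ε) - MB (y - ε + r * ε) (y - ε) := by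
    rw [hgdef]
    unfold MB
    rw [Real.log_div ha2.ne' ha1.ne', Real.log_div hb2.ne' hb1.ne',
        Real.log_div hc2.ne' hc1.ne', Real.log_div hd2.ne' hd1.ne']
    ring
  rw [h0, hgr] at hle
  linarith
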